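/- Let X be a real normed vector space of dimension 3 and let n ≥ 3 be odd. Then there exist n points x_1,…,x_n in X for which the Fermat–Torricelli set ft(x_1,…,x_n) contains at least two distinct points, if and only if there exist continuous linear functionals φ_1,…,φ_n on X with ‖φ_i‖ = 1 for all i and Σ_{i=1}^n φ_i = 0, such that, writing F_i = F(φ_i) and calling F_i a point-face if it is a singleton and a segment-face if its linear span is two-dimensional, the following three conditions hold: (a) there exists a nonzero vector v ∈ X lying in the linear span of F_i for every index i such that F_i is a point-face; (b) for every pair of indices i, j such that F_i is a point-face and F_j is a segment-face, the linear span of F_i ∪ F_j has dimension 2; (c) there exists a nonzero vector w ∈ X lying in the linear span of F_j for every index j such that F_j is a segment-face. -/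

import Mathlib

open Set


/-- The Fermat–Torricelli set of the points `x 0, …, x (n-1)`: the set of points minimizing
the sum of distances to the `x i`. -/
def ft {X : Type*} [NormedAddCommGroup X] {n : ℕ} (x : Fin n → X) : Set X :=
  {p | ∀ q : X, ∑ i, ‖p - x i‖ ≤ ∑ i, ‖q - x i‖}

/-- The face of the unit sphere determined by a norm-one functional `φ`. -/
def face {X : Type*} [NormedAddCommGroup X] [NormedSpace ℝ X] (φ : X →L[ℝ] ℝ) : Set X :=
  {u | ‖u‖ = 1 ∧ φ u = 1}

/-- A face is a point-face if it is a singleton. -/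
def IsPointFace {X : Type*} [NormedAddCommGroup X] [NormedSpace ℝ X]
    (φ : X →L[ℝ] ℝ) : Prop :=
  ∃ u : X, face φ = {u}

/-- A face is a segment-face if its linear span is two-dimensional. -/
def IsSegmentFace {X : Type*} [NormedAddCommGroup X] [NormedSpace ℝ X]
    (φ : X →L[ℝ] ℝ) : Prop :=
  Module.finrank ℝ (Submodule.span ℝ (face φ)) = 2


section Aux
variable {X : Type*} [NormedAddCommGroup X] [NormedSpace ℝ X]

/-- Difference quotient of the norm at `y` in direction `v`. -/
noncomputable def ddQ (y v : X) (t : ℝ) : ℝ := (‖y + t • v‖ - ‖y‖) / t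

/-- One-sided directional derivative of the norm at `y` in direction `v`. -/
noncomputable def dd (y v : X) : ℝ := sInf (ddQ y v '' Set.Ioi 0)

lemma ddQ_mono (y v : X) {s t : ℝ} (hs : 0 < s) (hst : s ≤ t) :
    ddQ y v s ≤ ddQ y v t := by
  have ht : 0 < t := hs.trans_le hst
  have h1 : (s / t) * t = s := div_mul_cancel₀ s ht.ne'
  have hyv : y + s • v = (1 - s / t) • y + (s / t) • (y + t • v) := by
    rw [smul_add, smul_smul, h1, sub_smul, one_smul]; abel
  have key : ‖y + s • v‖ ≤ (1 - s / t) * ‖y‖ + (s / t) * ‖y + t • v‖ := by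
    rw [hyv]
    refine (norm_add_le _ _).trans ?_
    rw [norm_smul, norm_smul, Real.norm_eq_abs, Real.norm_eq_abs,
      abs_of_nonneg (sub_nonneg.2 (by rw [div_le_one ht]; exact hst)),
      abs_of_nonneg (by positivity)]
  have hst' : 0 < s / t := by positivity
  rw [ddQ, ddQ, div_le_div_iff₀ hs ht]
  nlinarith [key, norm_nonneg (y + t • v), norm_nonneg y]

lemma neg_norm_le_ddQ (y v : X) {t : ℝ} (ht : 0 < t) : -‖v‖ ≤ ddQ y v t := by
  rw [ddQ, le_div_iff₀ ht]
  have := norm_add_le (y + t • v) (-(t • v))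
  simp only [add_neg_cancel_right, norm_neg, norm_smul, Real.norm_eq_abs,
    abs_of_pos ht] at this
  nlinarith

lemma ddQ_nonempty (y v : X) : (ddQ y v '' Set.Ioi 0).Nonempty :=
  ⟨_, ⟨1, by norm_num, rfl⟩⟩

lemma ddQ_bddBelow (y v : X) : BddBelow (ddQ y v '' Set.Ioi 0) := by
  refine ⟨-‖v‖, ?_⟩
  rintro x ⟨t, ht, rfl⟩
  exact neg_norm_le_ddQ y v ht

lemma dd_le_ddQ (y v : X) {t : ℝ} (ht : 0 < t) : dd y v ≤ ddQ y v t :=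
  csInf_le (ddQ_bddBelow y v) ⟨t, ht, rfl⟩

lemma neg_norm_le_dd (y v : X) : -‖v‖ ≤ dd y v :=
  le_csInf (ddQ_nonempty y v) (by rintro x ⟨t, ht, rfl⟩; exact neg_norm_le_ddQ y v ht)

lemma dd_le_norm (y v : X) : dd y v ≤ ‖v‖ := by
  refine (dd_le_ddQ y v one_pos).trans ?_
  rw [ddQ, one_smul, div_one]
  have := norm_add_le y v
  linarith

lemma exists_ddQ_lt (y v : X) {ε : ℝ} (hε : 0 < ε) :
    ∃ t : ℝ, 0 < t ∧ ddQ y v t < dd y v + ε := by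
  obtain ⟨x, ⟨t, ht, rfl⟩, hx⟩ :=
    exists_lt_of_csInf_lt (ddQ_nonempty y v) (lt_add_of_pos_right (dd y v) hε)
  exact ⟨t, ht, hx⟩

lemma dd_add (y v w : X) : dd y (v + w) ≤ dd y v + dd y w := by
  refine le_of_forall_pos_le_add fun ε hε => ?_
  obtain ⟨t1, ht1, h1⟩ := exists_ddQ_lt y v (half_pos hε)
  obtain ⟨t2, ht2, h2⟩ := exists_ddQ_lt y w (half_pos hε)
  set t := min t1 t2 / 2 with htdef
  have ht : 0 < t := by positivity
  have h2t1 : 2 * t ≤ t1 := by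
    have := min_le_left t1 t2; rw [htdef]; linarith
  have h2t2 : 2 * t ≤ t2 := by
    have := min_le_right t1 t2; rw [htdef]; linarith
  have key : ddQ y (v + w) t ≤ ddQ y v (2 * t) + ddQ y w (2 * t) := by
    have hyv : y + t • (v + w) = (2⁻¹ : ℝ) • (y + (2 * t) • v) + (2⁻¹ : ℝ) • (y + (2 * t) • w) := by
      rw [smul_add]
      module
    have hn : ‖y + t • (v + w)‖ ≤ (2⁻¹ : ℝ) * ‖y + (2 * t) • v‖ + (2⁻¹ : ℝ) * ‖y + (2 * t) • w‖ := by
      rw [hyv]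
      refine (norm_add_le _ _).trans ?_
      rw [norm_smul, norm_smul]; norm_num
    rw [ddQ, ddQ, ddQ, ← add_div, div_le_div_iff₀ ht (by linarith)]
    nlinarith
  calc dd y (v + w) ≤ ddQ y (v + w) t := dd_le_ddQ _ _ ht
    _ ≤ ddQ y v (2 * t) + ddQ y w (2 * t) := key
    _ ≤ ddQ y v t1 + ddQ y w t2 :=
        add_le_add (ddQ_mono y v (by linarith) h2t1) (ddQ_mono y w (by linarith) h2t2)
    _ ≤ dd y v + dd y w + ε := by linarith

lemma ddQ_smul (y v : X) {c s : ℝ} (hc : 0 < c) (hs : 0 < s) :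
    ddQ y (c • v) s = c * ddQ y v (c * s) := by
  rw [ddQ, ddQ, smul_smul, mul_comm s c]
  field_simp

lemma dd_smul_le (y v : X) {c : ℝ} (hc : 0 < c) : dd y (c • v) ≤ c * dd y v := by
  refine le_of_forall_pos_le_add fun ε hε => ?_
  obtain ⟨t, ht, h1⟩ := exists_ddQ_lt y v (show 0 < ε / c by positivity)
  have hkey : ddQ y (c • v) (t / c) = c * ddQ y v t := by
    rw [ddQ_smul y v hc (by positivity), mul_div_cancel₀ _ hc.ne']
  calc dd y (c • v) ≤ ddQ y (c • v) (t / c) := dd_le_ddQ _ _ (by positivity)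
    _ = c * ddQ y v t := hkey
    _ ≤ c * (dd y v + ε / c) := by nlinarith
    _ = c * dd y v + ε := by field_simp

lemma dd_smul (y v : X) {c : ℝ} (hc : 0 < c) : dd y (c • v) = c * dd y v := by
  refine le_antisymm (dd_smul_le y v hc) ?_
  have h2 := dd_smul_le y (c • v) (show (0:ℝ) < c⁻¹ by positivity)
  rw [inv_smul_smul₀ hc.ne'] at h2
  have := mul_le_mul_of_nonneg_left h2 hc.le
  rw [← mul_assoc, mul_inv_cancel₀ hc.ne', one_mul] at this
  linarith

lemma dd_neg_self (y : X) : dd y (-y) = -‖y‖ := by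
  refine le_antisymm ?_ (by simpa using neg_norm_le_dd y (-y))
  refine (dd_le_ddQ y (-y) one_pos).trans ?_
  rw [ddQ, one_smul]
  simp

lemma dd_zero (y : X) : dd y 0 = 0 := by
  refine le_antisymm ?_ (by simpa using neg_norm_le_dd y 0)
  refine (dd_le_ddQ y 0 one_pos).trans ?_
  rw [ddQ]; simp


lemma sum_dd_nonneg {n : ℕ} (y : Fin n → X) (v : X)
    (h : ∀ t : ℝ, 0 < t → 0 ≤ ∑ i, ddQ (y i) v t) : 0 ≤ ∑ i, dd (y i) v := by
  by_contra hneg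
  push_neg at hneg
  have hn : n ≠ 0 := by
    rintro rfl
    simp at hneg
  have hnpos : (0 : ℝ) < n := by positivity
  set ε : ℝ := (-∑ i, dd (y i) v) / n with hε
  have hεpos : 0 < ε := div_pos (by linarith) hnpos
  choose t ht hQ using fun i => exists_ddQ_lt (y i) v hεpos
  have : Nonempty (Fin n) := ⟨⟨0, Nat.pos_of_ne_zero hn⟩⟩
  set t0 := Finset.univ.inf' Finset.univ_nonempty t with ht0def
  have ht0 : 0 < t0 := by
    rw [ht0def, Finset.lt_inf'_iff]
    exact fun i _ => ht i
  have hsum : ∑ i, ddQ (y i) v t0 ≤ ∑ i, ddQ (y i) v (t i) :=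
    Finset.sum_le_sum fun i _ =>
      ddQ_mono (y i) v ht0 (Finset.inf'_le _ (Finset.mem_univ i))
  have hsum2 : ∑ i, ddQ (y i) v (t i) < ∑ i, (dd (y i) v + ε) :=
    Finset.sum_lt_sum_of_nonempty Finset.univ_nonempty fun i _ => hQ i
  rw [Finset.sum_add_distrib, Finset.sum_const, Finset.card_univ, Fintype.card_fin,
    nsmul_eq_mul] at hsum2
  have hc : (n : ℝ) * ε = -∑ i, dd (y i) v := by
    rw [hε]; field_simp
  have := h t0 ht0
  linarith

/-- Key Hahn–Banach step: existence of norming functionals summing to zero. -/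
lemma exists_norming {n : ℕ} (y : Fin n → X) (hy : ∀ i, y i ≠ 0)
    (hmin : ∀ v : X, 0 ≤ ∑ i, dd (y i) v) :
    ∃ φ : Fin n → (X →L[ℝ] ℝ),
      (∀ i, ‖φ i‖ = 1) ∧ (∑ i, φ i = 0) ∧ (∀ i, φ i (y i) = ‖y i‖) ∧
      (∀ i, ∀ z : X, φ i z ≤ ‖z‖) := by
  classical
  set N : (Fin n → X) → ℝ := fun h => ∑ i, dd (y i) (h i) with hN
  have N_hom : ∀ c : ℝ, 0 < c → ∀ x : Fin n → X, N (c • x) = c * N x := by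
    intro c hc x
    rw [hN]; simp only [Pi.smul_apply]
    rw [Finset.mul_sum]
    exact Finset.sum_congr rfl fun i _ => dd_smul (y i) (x i) hc
  have N_add : ∀ x z : Fin n → X, N (x + z) ≤ N x + N z := by
    intro x z
    rw [hN]; simp only [Pi.add_apply]
    rw [← Finset.sum_add_distrib]
    exact Finset.sum_le_sum fun i _ => dd_add (y i) (x i) (z i)
  set diag : X →ₗ[ℝ] (Fin n → X) := LinearMap.pi fun _ => LinearMap.id with hdiag
  set p : Submodule ℝ (Fin n → X) := LinearMap.range diag
  set f : (Fin n → X) →ₗ.[ℝ] ℝ := (0 : (Fin n → X) →ₗ[ℝ] ℝ).toPMap p with hf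
  have hfle : ∀ x : f.domain, f x ≤ N x := by
    rintro ⟨x, hx⟩
    obtain ⟨v, rfl⟩ := hx
    have h0 : f ⟨diag v, ⟨v, rfl⟩⟩ = 0 := rfl
    rw [h0]
    simpa [hN, hdiag] using hmin v
  obtain ⟨g, hg0, hgle⟩ := exists_extension_of_le_sublinear f N N_hom N_add hfle
  have hgsingle : ∀ i (v : X), g (Pi.single i v) ≤ dd (y i) v := by
    intro i v
    refine (hgle _).trans ?_
    simp only [hN]
    rw [Finset.sum_eq_single_of_mem i (Finset.mem_univ i)]
    · rw [Pi.single_eq_same]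
    · intro j _ hj
      rw [Pi.single_eq_of_ne hj, dd_zero]
  have habs : ∀ i (v : X), |g (Pi.single i v)| ≤ ‖v‖ := by
    intro i v
    rw [abs_le]
    constructor
    · have := (hgsingle i (-v)).trans (dd_le_norm _ _)
      rw [Pi.single_neg, map_neg, norm_neg] at this
      linarith
    · exact (hgsingle i v).trans (dd_le_norm _ _)
  set φ' : Fin n → (X →ₗ[ℝ] ℝ) := fun i => g ∘ₗ LinearMap.single ℝ (fun _ => X) i with hφ'
  have hφ'single : ∀ i v, φ' i v = g (Pi.single i v) := fun i v => rfl
  set φ : Fin n → (X →L[ℝ] ℝ) := fun i =>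
    LinearMap.mkContinuous (φ' i) 1 (by
      intro v; rw [hφ'single, one_mul, Real.norm_eq_abs]; exact habs i v) with hφdef
  have hφapply : ∀ i v, φ i v = g (Pi.single i v) := fun i v => rfl
  have hφle : ∀ i, ∀ z : X, φ i z ≤ ‖z‖ := by
    intro i z
    rw [hφapply]
    exact (hgsingle i z).trans (dd_le_norm _ _)
  have hφy : ∀ i, φ i (y i) = ‖y i‖ := by
    intro i
    have h1 : φ i (-(y i)) ≤ -‖y i‖ := by
      rw [hφapply]
      exact (hgsingle i (-(y i))).trans_eq (dd_neg_self (y i))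
    rw [map_neg] at h1
    have h2 := hφle i (y i)
    linarith
  have hφnorm : ∀ i, ‖φ i‖ = 1 := by
    intro i
    refine le_antisymm (LinearMap.mkContinuous_norm_le _ zero_le_one _) ?_
    have h1 : ‖y i‖ = φ i (y i) := (hφy i).symm
    have h2 := (φ i).le_opNorm (y i)
    rw [Real.norm_eq_abs] at h2
    have h4 := le_abs_self (φ i (y i))
    have h3 : 0 < ‖y i‖ := norm_pos_iff.2 (hy i)
    nlinarith
  have hφsum : ∑ i, φ i = 0 := by
    ext v
    simp only [ContinuousLinearMap.sum_apply, ContinuousLinearMap.zero_apply]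
    have h1 : ∀ i, φ i v = g (Pi.single i v) := fun i => hφapply i v
    rw [Finset.sum_congr rfl fun i _ => h1 i, ← map_sum]
    have h2 : (∑ i, Pi.single i v : Fin n → X) = diag v := by
      ext j
      rw [Finset.sum_apply]
      rw [Finset.sum_eq_single_of_mem j (Finset.mem_univ j)]
      · simp [hdiag, LinearMap.pi_apply]
      · intro i _ hi
        exact Pi.single_eq_of_ne (Ne.symm hi) _
    rw [h2]
    have := hg0 ⟨diag v, ⟨v, rfl⟩⟩
    rw [this]
    rfl
  exact ⟨φ, hφnorm, hφsum, hφy, hφle⟩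

/-- If `φ` norms `z`, then `z` lies in the span of the face of `φ`. -/
lemma mem_span_face_of_norming (φ : X →L[ℝ] ℝ) {z : X} (hz : φ z = ‖z‖) :
    z ∈ Submodule.span ℝ (face φ) := by
  rcases eq_or_ne z 0 with rfl | hz0
  · exact Submodule.zero_mem _
  · have hnz : (0:ℝ) < ‖z‖ := norm_pos_iff.2 hz0
    have hu : ‖z‖⁻¹ • z ∈ face φ := by
      constructor
      · rw [norm_smul, Real.norm_eq_abs, abs_of_pos (by positivity), inv_mul_cancel₀ hnz.ne']
      · rw [map_smul, smul_eq_mul, hz, inv_mul_cancel₀ hnz.ne']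
    have : z = ‖z‖ • (‖z‖⁻¹ • z) := by rw [smul_smul, mul_inv_cancel₀ hnz.ne', one_smul]
    rw [this]
    exact Submodule.smul_mem _ _ (Submodule.subset_span hu)

lemma forward_dir {n : ℕ} (x : Fin n → X) (a b : X)
    (ha : a ∈ ft x) (hb : b ∈ ft x) (hab : a ≠ b) :
    ∃ φ : Fin n → (X →L[ℝ] ℝ),
        (∀ i, ‖φ i‖ = 1) ∧ ∑ i, φ i = 0 ∧
        (∃ v : X, v ≠ 0 ∧
          ∀ i, IsPointFace (φ i) → v ∈ Submodule.span ℝ (face (φ i))) ∧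
        (∀ i j : Fin n, IsPointFace (φ i) → IsSegmentFace (φ j) →
          Module.finrank ℝ (Submodule.span ℝ (face (φ i) ∪ face (φ j))) = 2) ∧
        (∃ w : X, w ≠ 0 ∧
          ∀ j, IsSegmentFace (φ j) → w ∈ Submodule.span ℝ (face (φ j))) := by
  classical
  set m : X := (2:ℝ)⁻¹ • (a + b) with hm
  have hterm : ∀ i, ‖m - x i‖ ≤ (2:ℝ)⁻¹ * (‖a - x i‖ + ‖b - x i‖) := by
    intro i
    have h1 : m - x i = (2:ℝ)⁻¹ • (a - x i) + (2:ℝ)⁻¹ • (b - x i) := by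
      rw [hm]; module
    rw [h1]
    refine (norm_add_le _ _).trans ?_
    rw [norm_smul, norm_smul, Real.norm_eq_abs, abs_of_pos (by norm_num : (0:ℝ) < 2⁻¹)]
    ring_nf
    linarith
  have hfab : ∑ i, ‖a - x i‖ = ∑ i, ‖b - x i‖ := le_antisymm (ha b) (hb a)
  have hcsum : ∑ i, (2:ℝ)⁻¹ * (‖a - x i‖ + ‖b - x i‖) = ∑ i, ‖a - x i‖ := by
    rw [← Finset.mul_sum, Finset.sum_add_distrib, ← hfab]; ring
  have hmsum : ∑ i, ‖m - x i‖ ≤ ∑ i, ‖a - x i‖ :=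
    (Finset.sum_le_sum fun i _ => hterm i).trans_eq hcsum
  have hm_mem : m ∈ ft x := fun q => hmsum.trans (ha q)
  have hsum_eq : ∑ i, ‖m - x i‖ = ∑ i, (2:ℝ)⁻¹ * (‖a - x i‖ + ‖b - x i‖) := by
    refine le_antisymm (Finset.sum_le_sum fun i _ => hterm i) ?_
    rw [hcsum]; exact ha m
  have heq : ∀ i, ‖m - x i‖ = (2:ℝ)⁻¹ * (‖a - x i‖ + ‖b - x i‖) := by
    intro i
    have := (Finset.sum_eq_sum_iff_of_le fun i (_ : i ∈ Finset.univ) => hterm i).1 hsum_eq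
    exact this i (Finset.mem_univ i)
  set y : Fin n → X := fun i => m - x i with hy
  have hyne : ∀ i, y i ≠ 0 := by
    intro i h0
    have h1 := heq i
    have h0' : m - x i = 0 := h0
    rw [h0', norm_zero] at h1
    have ha0 : ‖a - x i‖ = 0 := by
      have := norm_nonneg (a - x i); have := norm_nonneg (b - x i); linarith
    have hb0 : ‖b - x i‖ = 0 := by
      have := norm_nonneg (a - x i); have := norm_nonneg (b - x i); linarith
    have hax : a = x i := by rwa [norm_eq_zero, sub_eq_zero] at ha0
    have hbx : b = x i := by rwa [norm_eq_zero, sub_eq_zero] at hb0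
    exact hab (hax.trans hbx.symm)
  have hmin : ∀ v : X, 0 ≤ ∑ i, dd (y i) v := by
    intro v
    refine sum_dd_nonneg y v fun t ht => ?_
    have h1 : ∀ i, ddQ (y i) v t = (‖(m + t • v) - x i‖ - ‖m - x i‖) / t := by
      intro i
      rw [ddQ, hy]
      congr 2
      abel_nf
      rw [add_assoc]
    rw [Finset.sum_congr rfl fun i _ => h1 i]
    rw [← Finset.sum_div]
    apply div_nonneg _ ht.le
    rw [Finset.sum_sub_distrib]
    have := hm_mem (m + t • v)
    linarith
  obtain ⟨φ, hφnorm, hφsum, hφy, hφle⟩ := exists_norming y hyne hmin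
  -- φ i norms both a - x i and b - x i
  have hnorming : ∀ i, φ i (a - x i) = ‖a - x i‖ ∧ φ i (b - x i) = ‖b - x i‖ := by
    intro i
    have h2 : (a - x i) + (b - x i) = (2:ℝ) • y i := by
      rw [hy, hm]; module
    have h3 : φ i (a - x i) + φ i (b - x i) = ‖a - x i‖ + ‖b - x i‖ := by
      have := hφy i
      calc φ i (a - x i) + φ i (b - x i) = φ i ((a - x i) + (b - x i)) := (map_add _ _ _).symm
        _ = (2:ℝ) * φ i (y i) := by rw [h2, map_smul, smul_eq_mul]
        _ = (2:ℝ) * ‖y i‖ := by rw [hφy i]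
        _ = ‖a - x i‖ + ‖b - x i‖ := by
            have h6 := heq i
            have h7 : ‖y i‖ = ‖m - x i‖ := rfl
            rw [h7]
            linarith
    have h4 := hφle i (a - x i)
    have h5 := hφle i (b - x i)
    constructor <;> linarith
  have hspan : ∀ i, b - a ∈ Submodule.span ℝ (face (φ i)) := by
    intro i
    have h1 : a - x i ∈ Submodule.span ℝ (face (φ i)) :=
      mem_span_face_of_norming _ (hnorming i).1
    have h2 : b - x i ∈ Submodule.span ℝ (face (φ i)) :=
      mem_span_face_of_norming _ (hnorming i).2
    have h3 : b - a = (b - x i) - (a - x i) := by abel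
    rw [h3]
    exact Submodule.sub_mem _ h2 h1
  have hba : b - a ≠ 0 := sub_ne_zero.2 (Ne.symm hab)
  refine ⟨φ, hφnorm, hφsum, ⟨b - a, hba, fun i _ => hspan i⟩, ?_, ⟨b - a, hba, fun j _ => hspan j⟩⟩
  intro i j hpt hseg
  obtain ⟨ui, hui⟩ := hpt
  have hmem : b - a ∈ Submodule.span ℝ ({ui} : Set X) := by
    have := hspan i; rwa [hui] at this
  rw [Submodule.mem_span_singleton] at hmem
  obtain ⟨c, hc⟩ := hmem
  have hc0 : c ≠ 0 := by
    rintro rfl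
    rw [zero_smul] at hc
    exact hba hc.symm
  have huij : ui ∈ Submodule.span ℝ (face (φ j)) := by
    have h1 : ui = c⁻¹ • (b - a) := by
      rw [← hc, smul_smul, inv_mul_cancel₀ hc0, one_smul]
    rw [h1]
    exact Submodule.smul_mem _ _ (hspan j)
  have hle : Submodule.span ℝ (face (φ i)) ≤ Submodule.span ℝ (face (φ j)) := by
    rw [hui, Submodule.span_le]
    rintro z hz
    rw [Set.mem_singleton_iff.1 hz]
    exact huij
  rw [Submodule.span_union, sup_eq_right.2 hle]
  exact hseg

/-- In a nontrivial finite-dimensional space, every norm-one functional attains its norm. -/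
lemma face_nonempty [FiniteDimensional ℝ X] [Nontrivial X]
    (φ : X →L[ℝ] ℝ) (hφ : ‖φ‖ = 1) : (face φ).Nonempty := by
  have hsne : (Metric.sphere (0:X) 1).Nonempty := NormedSpace.sphere_nonempty.2 zero_le_one
  obtain ⟨u0, hu0mem, hu0max⟩ :=
    (isCompact_sphere (0:X) 1).exists_isMaxOn hsne (φ.continuous.continuousOn)
  have hu0 : ‖u0‖ = 1 := by simpa using hu0mem
  set M := φ u0 with hM
  have hle : ∀ z ∈ Metric.sphere (0:X) 1, φ z ≤ M := fun z hz => hu0max hz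
  have hMnonneg : 0 ≤ M := by
    have h1 := hle (-u0) (by simp [hu0])
    have h2 := hle u0 hu0mem
    rw [map_neg] at h1
    linarith
  have hbound : ∀ z : X, |φ z| ≤ M * ‖z‖ := by
    intro z
    rcases eq_or_ne z 0 with rfl | hz
    · simp
    · have hnz : (0:ℝ) < ‖z‖ := norm_pos_iff.2 hz
      have hmem : ‖z‖⁻¹ • z ∈ Metric.sphere (0:X) 1 := by
        simp [norm_smul, abs_of_pos (inv_pos.2 hnz), inv_mul_cancel₀ hnz.ne']
      have h1 := hle _ hmem
      have hmem2 : -(‖z‖⁻¹ • z) ∈ Metric.sphere (0:X) 1 := by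
        simpa using hmem
      have h2 := hle _ hmem2
      rw [map_neg] at h2
      rw [map_smul, smul_eq_mul] at h1 h2
      have h1' : φ z ≤ M * ‖z‖ := by
        have := mul_le_mul_of_nonneg_left h1 hnz.le
        rw [← mul_assoc, mul_inv_cancel₀ hnz.ne', one_mul] at this
        linarith [this, mul_comm M ‖z‖]
      have h2' : -(φ z) ≤ M * ‖z‖ := by
        have := mul_le_mul_of_nonneg_left h2 hnz.le
        rw [mul_neg, ← mul_assoc, mul_inv_cancel₀ hnz.ne', one_mul] at this
        linarith [this, mul_comm M ‖z‖]
      rw [abs_le]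
      constructor <;> linarith
  have hMge : 1 ≤ M := by
    by_contra hlt
    push_neg at hlt
    have : ‖φ‖ ≤ M := φ.opNorm_le_bound hMnonneg fun z => by
      rw [Real.norm_eq_abs]; exact hbound z
    linarith [hφ ▸ this]
  have hMle : M ≤ 1 := by
    have := φ.le_opNorm u0
    rw [hφ, hu0, mul_one, Real.norm_eq_abs] at this
    exact (le_abs_self M).trans this
  exact ⟨u0, hu0, le_antisymm hMle hMge⟩

/-- Trichotomy for faces in dimension 3. -/
lemma face_trichotomy (hd : Module.finrank ℝ X = 3)
    (φ : X →L[ℝ] ℝ) (hφ : ‖φ‖ = 1) :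
    IsPointFace φ ∨ IsSegmentFace φ ∨ Submodule.span ℝ (face φ) = ⊤ := by
  have : FiniteDimensional ℝ X := FiniteDimensional.of_finrank_eq_succ hd
  have : Nontrivial X := Module.nontrivial_of_finrank_pos (R := ℝ) (M := X) (by rw [hd]; norm_num)
  obtain ⟨u0, hu0⟩ := face_nonempty φ hφ
  set r := Module.finrank ℝ (Submodule.span ℝ (face φ)) with hr
  have hrle : r ≤ 3 := hd ▸ Submodule.finrank_le _
  rcases eq_or_ne r 2 with h2 | h2
  · exact Or.inr (Or.inl h2)
  rcases le_or_gt r 1 with h1 | h1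
  · -- point face
    left
    have hsub : ∀ u1 ∈ face φ, ∀ u2 ∈ face φ, u1 = u2 := by
      intro u1 h1' u2 h2'
      by_contra hne
      have hli : LinearIndependent ℝ ![u1, u2] := by
        rw [LinearIndependent.pair_iff]
        intro s t hst
        by_contra hc
        have hφst : s * φ u1 + t * φ u2 = 0 := by
          have := congrArg φ hst
          rw [map_add, map_smul, map_smul, smul_eq_mul, smul_eq_mul, map_zero] at this
          exact this
        rw [h1'.2, h2'.2, mul_one, mul_one] at hφst
        have hts : t = -s := by linarith
        rw [hts] at hst
        have hs : s ≠ 0 := by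
          rintro rfl
          simp at hc
          exact hc (by rw [hts]; ring)
        have : s • u1 - s • u2 = 0 := by
          rw [← hst]; rw [neg_smul]; abel
        have : s • (u1 - u2) = 0 := by rw [smul_sub]; exact this
        have := smul_eq_zero.1 this
        rcases this with h | h
        · exact hs h
        · exact hne (sub_eq_zero.1 h)
      have hle2 : Submodule.span ℝ (Set.range ![u1, u2]) ≤ Submodule.span ℝ (face φ) := by
        apply Submodule.span_le.2
        rintro z ⟨k, rfl⟩
        apply Submodule.subset_span
        fin_cases k
        · exact h1'
        · exact h2'
      have h2' := Submodule.finrank_mono hle2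
      rw [finrank_span_eq_card hli] at h2'
      simp at h2'
      omega
    exact ⟨u0, Set.eq_singleton_iff_unique_mem.2 ⟨hu0, fun z hz => hsub z hz u0 hu0⟩⟩
  · -- r = 3: top
    right; right
    have hr3 : r = 3 := by omega
    exact Submodule.eq_top_of_finrank_eq (by rw [← hr, hr3, hd])

lemma phi_le_norm (φ : X →L[ℝ] ℝ) (hφ : ‖φ‖ = 1) (z : X) : φ z ≤ ‖z‖ := by
  have := φ.le_opNorm z
  rw [hφ, one_mul, Real.norm_eq_abs] at this
  exact (le_abs_self _).trans this

lemma norming_combo (φ : X →L[ℝ] ℝ) (hφ : ‖φ‖ = 1) {m : ℕ} (t : Fin m → ℝ)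
    (ht : ∀ k, 0 ≤ t k) (g : Fin m → X) (hg : ∀ k, g k ∈ face φ) :
    φ (∑ k, t k • g k) = ‖∑ k, t k • g k‖ := by
  have h1 : φ (∑ k, t k • g k) = ∑ k, t k := by
    rw [map_sum]
    refine Finset.sum_congr rfl fun k _ => ?_
    rw [map_smul, smul_eq_mul, (hg k).2, mul_one]
  have h2 : ‖∑ k, t k • g k‖ ≤ ∑ k, t k := by
    refine (norm_sum_le _ _).trans ?_
    refine Finset.sum_le_sum fun k _ => ?_
    rw [norm_smul, (hg k).1, mul_one, Real.norm_eq_abs, abs_of_nonneg (ht k)]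
  have h3 := phi_le_norm φ hφ (∑ k, t k • g k)
  linarith

lemma exists_shift (φ : X →L[ℝ] ℝ) (hφ : ‖φ‖ = 1) {u : X}
    (hu : u ∈ Submodule.span ℝ (face φ)) :
    ∃ y : X, φ y = ‖y‖ ∧ φ (y + u) = ‖y + u‖ := by
  obtain ⟨m, c, g, hcg⟩ := Submodule.mem_span_set'.1 hu
  refine ⟨∑ k, max (-(c k)) 0 • (g k : X), ?_, ?_⟩
  · exact norming_combo φ hφ _ (fun k => le_max_right _ _) _ (fun k => (g k).2)
  · have hxy : (∑ k, max (-(c k)) 0 • (g k : X)) + u = ∑ k, max (c k) 0 • (g k : X) := by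
      rw [← hcg, ← Finset.sum_add_distrib]
      refine Finset.sum_congr rfl fun k _ => ?_
      rw [← add_smul]
      congr 1
      rcases le_total (c k) 0 with h | h
      · rw [max_eq_left (by linarith), max_eq_right h]; ring
      · rw [max_eq_right (by linarith), max_eq_left h]; ring
    rw [hxy]
    exact norming_combo φ hφ _ (fun k => le_max_right _ _) _ (fun k => (g k).2)

lemma backward_dir (hd : Module.finrank ℝ X = 3) {n : ℕ}
    (φ : Fin n → (X →L[ℝ] ℝ))
    (hφnorm : ∀ i, ‖φ i‖ = 1) (hφsum : ∑ i, φ i = 0)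
    (hA : ∃ v : X, v ≠ 0 ∧
      ∀ i, IsPointFace (φ i) → v ∈ Submodule.span ℝ (face (φ i)))
    (hB : ∀ i j : Fin n, IsPointFace (φ i) → IsSegmentFace (φ j) →
      Module.finrank ℝ (Submodule.span ℝ (face (φ i) ∪ face (φ j))) = 2)
    (hC : ∃ w : X, w ≠ 0 ∧
      ∀ j, IsSegmentFace (φ j) → w ∈ Submodule.span ℝ (face (φ j))) :
    ∃ x : Fin n → X, ∃ a ∈ ft x, ∃ b ∈ ft x, a ≠ b := by
  classical
  have hFD : FiniteDimensional ℝ X := FiniteDimensional.of_finrank_eq_succ hd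
  -- find a common nonzero direction u in the span of every face
  have hukey : ∃ u : X, u ≠ 0 ∧ ∀ i, u ∈ Submodule.span ℝ (face (φ i)) := by
    by_cases hpt : ∃ i0, IsPointFace (φ i0)
    · obtain ⟨i0, hp0⟩ := hpt
      obtain ⟨v, hv0, hv⟩ := hA
      refine ⟨v, hv0, fun i => ?_⟩
      rcases face_trichotomy hd (φ i) (hφnorm i) with hp | hs | htop
      · exact hv i hp
      · have hfin := hB i0 i hp0 hs
        have hle : Submodule.span ℝ (face (φ i)) ≤
            Submodule.span ℝ (face (φ i0) ∪ face (φ i)) :=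
          Submodule.span_mono Set.subset_union_right
        have heq : Submodule.span ℝ (face (φ i)) =
            Submodule.span ℝ (face (φ i0) ∪ face (φ i)) :=
          Submodule.eq_of_le_of_finrank_eq hle (by rw [hs, hfin])
        have hle0 : Submodule.span ℝ (face (φ i0)) ≤ Submodule.span ℝ (face (φ i)) := by
          rw [heq]
          exact Submodule.span_mono Set.subset_union_left
        exact hle0 (hv i0 hp0)
      · rw [htop]; trivial
    · obtain ⟨w, hw0, hw⟩ := hC
      refine ⟨w, hw0, fun i => ?_⟩
      rcases face_trichotomy hd (φ i) (hφnorm i) with hp | hs | htop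
      · exact absurd ⟨i, hp⟩ hpt
      · exact hw i hs
      · rw [htop]; trivial
  obtain ⟨u, hu0, hu⟩ := hukey
  choose y hy1 hy2 using fun i => exists_shift (φ i) (hφnorm i) (hu i)
  refine ⟨fun i => -(y i), 0, ?_, u, ?_, fun h => hu0 h.symm⟩
  · -- 0 ∈ ft
    intro q
    have hlhs : ∀ i, ‖(0:X) - -(y i)‖ = ‖y i‖ := by intro i; simp
    have hsumq : ∑ i, (φ i) q = 0 := by
      rw [← ContinuousLinearMap.sum_apply, hφsum, ContinuousLinearMap.zero_apply]
    calc ∑ i, ‖(0:X) - -(y i)‖ = ∑ i, ‖y i‖ := Finset.sum_congr rfl fun i _ => hlhs i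
      _ = ∑ i, φ i (y i) := Finset.sum_congr rfl fun i _ => (hy1 i).symm
      _ = ∑ i, (φ i q + φ i (y i)) - ∑ i, φ i q := by rw [Finset.sum_add_distrib]; ring
      _ = ∑ i, φ i (q + y i) := by
          rw [hsumq, sub_zero]
          exact Finset.sum_congr rfl fun i _ => (map_add _ _ _).symm
      _ ≤ ∑ i, ‖q + y i‖ :=
          Finset.sum_le_sum fun i _ => phi_le_norm (φ i) (hφnorm i) _
      _ = ∑ i, ‖q - -(y i)‖ := Finset.sum_congr rfl fun i _ => by rw [sub_neg_eq_add]
  · -- u ∈ ft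
    intro q
    have hsumq : ∑ i, (φ i) (q - u) = 0 := by
      rw [← ContinuousLinearMap.sum_apply, hφsum, ContinuousLinearMap.zero_apply]
    calc ∑ i, ‖u - -(y i)‖ = ∑ i, ‖y i + u‖ := by
          refine Finset.sum_congr rfl fun i _ => ?_
          rw [sub_neg_eq_add, add_comm]
      _ = ∑ i, φ i (y i + u) := Finset.sum_congr rfl fun i _ => (hy2 i).symm
      _ = ∑ i, (φ i (q - u) + φ i (y i + u)) - ∑ i, φ i (q - u) := by
          rw [Finset.sum_add_distrib]; ring
      _ = ∑ i, φ i (q + y i) := by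
          rw [hsumq, sub_zero]
          refine Finset.sum_congr rfl fun i _ => ?_
          rw [← map_add]
          congr 1
          abel
      _ ≤ ∑ i, ‖q + y i‖ :=
          Finset.sum_le_sum fun i _ => phi_le_norm (φ i) (hφnorm i) _
      _ = ∑ i, ‖q - -(y i)‖ := Finset.sum_congr rfl fun i _ => by rw [sub_neg_eq_add]


end Aux

/-- Criterion for non-uniqueness in a three-dimensional Minkowski space: for odd `n ≥ 3`,
there exist `n` points with non-unique Fermat–Torricelli set iff there is a consistent set
of `n` faces of the unit sphere satisfying conditions (a), (b), (c). -/
theorem nonunique_ft_iff_consistent_faces_dim3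
    {X : Type*} [NormedAddCommGroup X] [NormedSpace ℝ X]
    (hd : Module.finrank ℝ X = 3)
    {n : ℕ} (hn : 3 ≤ n) (hodd : Odd n) :
    (∃ x : Fin n → X, ∃ a ∈ ft x, ∃ b ∈ ft x, a ≠ b) ↔
      ∃ φ : Fin n → (X →L[ℝ] ℝ),
        (∀ i, ‖φ i‖ = 1) ∧ ∑ i, φ i = 0 ∧
        (∃ v : X, v ≠ 0 ∧
          ∀ i, IsPointFace (φ i) → v ∈ Submodule.span ℝ (face (φ i))) ∧
        (∀ i j : Fin n, IsPointFace (φ i) → IsSegmentFace (φ j) →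
          Module.finrank ℝ (Submodule.span ℝ (face (φ i) ∪ face (φ j))) = 2) ∧
        (∃ w : X, w ≠ 0 ∧
          ∀ j, IsSegmentFace (φ j) → w ∈ Submodule.span ℝ (face (φ j))) := by
  constructor
  · rintro ⟨x, a, ha, b, hb, hab⟩
    exact forward_dir x a b ha hb hab
  · rintro ⟨φ, h1, h2, h3, h4, h5⟩
    exact backward_dir hd φ h1 h2 h3 h4 h5
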